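/- For a finite simple graph G, the set of eigenvalues of the signless Laplacian tensor Q(G^{k,k/2}) equals the union, over all nonempty subsets U ⊆ V with the induced subgraph G[U] connected and all diagonal matrices E = diag(ε_u)_{u∈U} whose entries are k-th roots of unity, of the sets of eigenvalues of the complex matrices D_U + E·A_U·E; and the set of H-eigenvalues of Q(G^{k,k/2}) equals the union, over all nonempty U ⊆ V with G[U] connected, of the sets of eigenvalues of the real symmetric matrices D_U + A_U. -/

import Mathlib

open scoped BigOperators
open Matrix

/-- `lam` is an eigenvalue of the signless Laplacian tensor `Q(G^{k,k/2})` of the generalized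
power hypergraph `G^{k,k/2}` with eigenvector `x`. -/
def IsSignlessLapEigenpair {V : Type*} [Fintype V] [DecidableEq V] (k s : ℕ)
    (G : SimpleGraph V) [DecidableRel G.Adj]
    (lam : ℂ) (x : V × Fin s → ℂ) : Prop :=
  x ≠ 0 ∧ ∀ (u : V) (v : Fin s),
    (lam - (G.degree u : ℂ)) * x (u, v) ^ (k - 1) =
      ∑ w ∈ G.neighborFinset u,
        (∏ p ∈ Finset.univ.erase v, x (u, p)) * ∏ q : Fin s, x (w, q)

section Aux

variable {V : Type*} [Fintype V] [DecidableEq V]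

/-- The scalar eigen-equation of the power hypergraph, over a general field. -/
def EigEq {F : Type*} [Field F] (k s : ℕ) (G : SimpleGraph V) [DecidableRel G.Adj]
    (lam : F) (x : V × Fin s → F) : Prop :=
  ∀ (u : V) (v : Fin s),
    (lam - (G.degree u : F)) * x (u, v) ^ (k - 1) =
      ∑ w ∈ G.neighborFinset u,
        (∏ p ∈ Finset.univ.erase v, x (u, p)) * ∏ q : Fin s, x (w, q)

/-- The scalar version of the matrix eigen-equation. -/
def MatEq {F : Type*} [Field F] (G : SimpleGraph V) [DecidableRel G.Adj]
    (U : Finset V) (eps y : {u // u ∈ U} → F) (lam : F) : Prop :=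
  ∀ u : {u // u ∈ U},
    (lam - (G.degree u.1 : F)) * y u =
      eps u * ∑ w ∈ G.neighborFinset u.1,
        (if h : w ∈ U then eps ⟨w, h⟩ * y ⟨w, h⟩ else 0)

lemma sum_subtype_adj {F : Type*} [Field F] (G : SimpleGraph V) [DecidableRel G.Adj]
    (U : Finset V) (u : V) (f : {w // w ∈ U} → F) :
    (∑ w : {w // w ∈ U}, if G.Adj u w.1 then f w else 0) =
      ∑ w ∈ G.neighborFinset u, (if h : w ∈ U then f ⟨w, h⟩ else 0) := by
  classical
  have h1 : (∑ w : {w // w ∈ U}, if G.Adj u w.1 then f w else 0)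
      = ∑ w ∈ U, (if h : w ∈ U then (if G.Adj u w then f ⟨w, h⟩ else 0) else 0) := by
    rw [← Finset.sum_attach U
      (fun w => if h : w ∈ U then (if G.Adj u w then f ⟨w, h⟩ else 0) else 0),
      Finset.univ_eq_attach]
    exact Finset.sum_congr rfl fun w _ => by simp [w.2]
  rw [h1]
  have h2 : (∑ w ∈ U, (if h : w ∈ U then (if G.Adj u w then f ⟨w, h⟩ else 0) else 0))
      = ∑ w : V, (if h : w ∈ U then (if G.Adj u w then f ⟨w, h⟩ else 0) else 0) := by
    apply Finset.sum_subset (Finset.subset_univ U)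
    intro w _ hw
    rw [dif_neg hw]
  have h3 : (∑ w ∈ G.neighborFinset u, (if h : w ∈ U then f ⟨w, h⟩ else 0))
      = ∑ w : V, (if G.Adj u w then (if h : w ∈ U then f ⟨w, h⟩ else 0) else 0) := by
    rw [SimpleGraph.neighborFinset_eq_filter, Finset.sum_filter]
  rw [h2, h3]
  apply Finset.sum_congr rfl
  intro w _
  by_cases h : w ∈ U <;> by_cases ha : G.Adj u w <;> simp [h, ha]

lemma mulVec_iff {F : Type*} [Field F] (G : SimpleGraph V) [DecidableRel G.Adj]
    (U : Finset V) (eps y : {u // u ∈ U} → F) (lam : F) :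
    ((Matrix.diagonal (fun u : {u // u ∈ U} => (G.degree u.1 : F)) +
        Matrix.diagonal eps * (G.adjMatrix F).submatrix Subtype.val Subtype.val *
          Matrix.diagonal eps) *ᵥ y = lam • y) ↔ MatEq G U eps y lam := by
  classical
  have key : ∀ u : {u // u ∈ U},
      ((Matrix.diagonal (fun u : {u // u ∈ U} => (G.degree u.1 : F)) +
        Matrix.diagonal eps * (G.adjMatrix F).submatrix Subtype.val Subtype.val *
          Matrix.diagonal eps) *ᵥ y) u =
      (G.degree u.1 : F) * y u + eps u * ∑ w ∈ G.neighborFinset u.1,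
        (if h : w ∈ U then eps ⟨w, h⟩ * y ⟨w, h⟩ else 0) := by
    intro u
    rw [Matrix.add_mulVec, Pi.add_apply, Matrix.mulVec_diagonal,
      ← sum_subtype_adj G U u.1 (fun w => eps w * y w)]
    congr 1
    rw [Matrix.mulVec, dotProduct, Finset.mul_sum]
    apply Finset.sum_congr rfl
    intro w _
    rw [Matrix.mul_diagonal, Matrix.diagonal_mul]
    simp only [Matrix.submatrix_apply, SimpleGraph.adjMatrix_apply]
    by_cases h : G.Adj u.1 w.1 <;> simp [h] <;> ring
  rw [funext_iff]
  constructor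
  · intro h u
    have := h u
    rw [key u, Pi.smul_apply, smul_eq_mul] at this
    linear_combination -this
  · intro h u
    have := h u
    rw [key u, Pi.smul_apply, smul_eq_mul]
    linear_combination -this

lemma singleton_connected (G : SimpleGraph V) (u : V) :
    (G.induce (↑({u} : Finset V) : Set V)).Connected := by
  rw [SimpleGraph.connected_iff]
  refine ⟨?_, ⟨⟨u, by simp⟩⟩⟩
  intro a b
  have ha : a.1 = u := by have := a.2; simpa using this
  have hb : b.1 = u := by have := b.2; simpa using this
  have : a = b := Subtype.ext (ha.trans hb.symm)
  rw [this]

lemma singleton_case {F : Type*} [Field F] (k : ℕ) (G : SimpleGraph V) [DecidableRel G.Adj]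
    (u : V) (lam : F) (h : lam = (G.degree u : F)) :
    ∃ U : Finset V, U.Nonempty ∧ (G.induce (↑U : Set V)).Connected ∧
      ∃ eps : {w // w ∈ U} → F, (∀ w, eps w ^ k = 1) ∧
        ∃ y : {w // w ∈ U} → F, y ≠ 0 ∧ (∀ w, y w ≠ 0) ∧
          (∀ w : {w // w ∈ U},
            (lam - (G.degree w.1 : F)) * y w =
              eps w * ∑ z ∈ G.neighborFinset w.1,
                (if hz : z ∈ U then eps ⟨z, hz⟩ * y ⟨z, hz⟩ else 0)) := by
  refine ⟨{u}, ⟨u, by simp⟩, singleton_connected G u, fun _ => 1, fun _ => one_pow k,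
    fun _ => 1, ?_, fun _ => one_ne_zero, ?_⟩
  · intro hy
    exact one_ne_zero (congrFun hy ⟨u, by simp⟩)
  · intro w
    have hw : w.1 = u := Finset.mem_singleton.mp w.2
    have hsum : (∑ z ∈ G.neighborFinset w.1,
        (if hz : z ∈ ({u} : Finset V) then (1:F) * 1 else 0)) = 0 := by
      apply Finset.sum_eq_zero
      intro z hz
      rw [SimpleGraph.mem_neighborFinset] at hz
      have : z ≠ u := by rw [← hw]; exact hz.ne'
      simp [this]
    rw [hsum, hw, h]
    ring

lemma fwd {F : Type*} [Field F] (k s : ℕ) (hk : 4 ≤ k) (hks : k = 2 * s)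
    (G : SimpleGraph V) [DecidableRel G.Adj] (lam : F) (x : V × Fin s → F)
    (hx : x ≠ 0) (heq : EigEq k s G lam x) :
    ∃ U : Finset V, U.Nonempty ∧ (G.induce (↑U : Set V)).Connected ∧
      ∃ eps : {w // w ∈ U} → F, (∀ w, eps w ^ k = 1) ∧
        ∃ y : {w // w ∈ U} → F, y ≠ 0 ∧ (∀ w, y w ≠ 0) ∧
          (∀ w : {w // w ∈ U},
            (lam - (G.degree w.1 : F)) * y w =
              eps w * ∑ z ∈ G.neighborFinset w.1,
                (if hz : z ∈ U then eps ⟨z, hz⟩ * y ⟨z, hz⟩ else 0)) := by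
  classical
  have hs : 2 ≤ s := by omega
  by_cases hlam : ∃ u : V, lam = (G.degree u : F)
  · obtain ⟨u, hu⟩ := hlam
    exact singleton_case k G u lam hu
  push_neg at hlam
  -- notation
  set P : V → F := fun u => ∏ q : Fin s, x (u, q) with hPdef
  set S : V → F := fun u => ∑ w ∈ G.neighborFinset u, P w with hSdef
  have hsub : ∀ u : V, lam - (G.degree u : F) ≠ 0 := fun u => sub_ne_zero_of_ne (hlam u)
  -- Eq1
  have eq1 : ∀ (u : V) (v : Fin s), (lam - (G.degree u : F)) * x (u, v) ^ k = P u * S u := by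
    intro u v
    have hk1 : k - 1 + 1 = k := by omega
    have hxp : x (u, v) ^ k = x (u, v) ^ (k - 1) * x (u, v) := by
      conv_lhs => rw [← hk1]
      rw [pow_succ]
    calc (lam - (G.degree u : F)) * x (u, v) ^ k
        = ((lam - (G.degree u : F)) * x (u, v) ^ (k - 1)) * x (u, v) := by
          rw [hxp]; ring
      _ = (∑ w ∈ G.neighborFinset u,
            (∏ p ∈ Finset.univ.erase v, x (u, p)) * ∏ q : Fin s, x (w, q)) * x (u, v) := by
          rw [heq u v]
      _ = P u * S u := by
          rw [hSdef, Finset.sum_mul, Finset.mul_sum]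
          apply Finset.sum_congr rfl
          intro w _
          have : x (u, v) * ∏ p ∈ Finset.univ.erase v, x (u, p) = P u :=
            Finset.mul_prod_erase Finset.univ (fun p => x (u, p)) (Finset.mem_univ v)
          rw [← this]; ring
  -- all entries of a half edge are nonzero once one is
  have hPx : ∀ (u : V) (v : Fin s), x (u, v) ≠ 0 → P u ≠ 0 := by
    intro u v hxv hPu
    rw [hPdef] at hPu
    obtain ⟨p, -, hp⟩ := Finset.prod_eq_zero_iff.mp hPu
    have hpv : p ≠ v := fun h => hxv (h ▸ hp)
    have h0 : (lam - (G.degree u : F)) * x (u, v) ^ (k - 1) = 0 := by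
      rw [heq u v]
      apply Finset.sum_eq_zero
      intro w _
      rw [Finset.prod_eq_zero (Finset.mem_erase.mpr ⟨hpv, Finset.mem_univ p⟩) hp, zero_mul]
    rcases mul_eq_zero.mp h0 with h | h
    · exact hsub u h
    · exact hxv (pow_eq_zero_iff (by omega : k - 1 ≠ 0) |>.mp h)
  have xne : ∀ u : V, P u ≠ 0 → ∀ v : Fin s, x (u, v) ≠ 0 := by
    intro u h v hv
    exact h (Finset.prod_eq_zero (Finset.mem_univ v) hv)
  -- base point
  obtain ⟨⟨u0, v0'⟩, hx0⟩ := Function.ne_iff.mp hx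
  have hu0 : P u0 ≠ 0 := hPx u0 v0' hx0
  -- x(u,·)^k constant on half edges
  have hxk : ∀ (u : V) (v v' : Fin s), x (u, v) ^ k = x (u, v') ^ k := by
    intro u v v'
    have := (eq1 u v).trans (eq1 u v').symm
    exact mul_left_cancel₀ (hsub u) this
  -- the auxiliary graph
  set H : SimpleGraph V :=
    { Adj := fun a b => G.Adj a b ∧ P a ≠ 0 ∧ P b ≠ 0,
      symm := ⟨fun a b h => ⟨h.1.symm, h.2.2, h.2.1⟩⟩,
      loopless := ⟨fun a h => G.loopless.irrefl a h.1⟩ } with hHdef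
  have hHadj : ∀ a b, H.Adj a b ↔ (G.Adj a b ∧ P a ≠ 0 ∧ P b ≠ 0) := fun a b => Iff.rfl
  set U : Finset V := Finset.univ.filter (fun u => H.Reachable u0 u) with hUdef
  have hU : ∀ u : V, u ∈ U ↔ H.Reachable u0 u := by
    intro u; rw [hUdef, Finset.mem_filter]; simp
  have hu0U : u0 ∈ U := (hU u0).mpr (SimpleGraph.Reachable.refl u0)
  have walkP : ∀ (a b : V), H.Walk a b → P a ≠ 0 → P b ≠ 0 := by
    intro a b p
    induction p with
    | nil => exact id
    | cons h q ih => exact fun _ => ih h.2.2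
  have hPU : ∀ u ∈ U, P u ≠ 0 := by
    intro u hu
    obtain ⟨p⟩ := (hU u).mp hu
    exact walkP u0 u p hu0
  have hclosed : ∀ u ∈ U, ∀ w : V, G.Adj u w → P w ≠ 0 → w ∈ U := by
    intro u hu w hadj hw
    exact (hU w).mpr (((hU u).mp hu).trans (SimpleGraph.Adj.reachable ⟨hadj, hPU u hu, hw⟩))
  -- connectivity
  have hmem : ∀ {a : V}, a ∈ U → a ∈ (↑U : Set V) := fun {a} ha => Finset.mem_coe.mpr ha
  have walkReach : ∀ (a b : V) (p : H.Walk a b) (ha : a ∈ U),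
      (G.induce (↑U : Set V)).Reachable ⟨a, hmem ha⟩ ⟨b, hmem ((hU b).mpr
        (((hU a).mp ha).trans ⟨p⟩))⟩ := by
    intro a b p
    induction p with
    | nil => intro ha; rfl
    | @cons a c b h q ih =>
      intro ha
      have hc : c ∈ U := (hU c).mpr (((hU a).mp ha).trans (SimpleGraph.Adj.reachable h))
      have hadj : (G.induce (↑U : Set V)).Adj ⟨a, hmem ha⟩ ⟨c, hmem hc⟩ := h.1
      exact (hadj.reachable).trans (ih hc)
  have hconn : (G.induce (↑U : Set V)).Connected := by
    rw [SimpleGraph.connected_iff]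
    constructor
    · rintro ⟨a, ha⟩ ⟨b, hb⟩
      have ha' : a ∈ U := Finset.mem_coe.mp ha
      have hb' : b ∈ U := Finset.mem_coe.mp hb
      obtain ⟨pa⟩ := (hU a).mp ha'
      obtain ⟨pb⟩ := (hU b).mp hb'
      have r1 := walkReach a u0 pa.reverse ha'
      have r2 := walkReach u0 b pb hu0U
      exact (r1.trans r2).mono (by exact fun _ _ h => h) |>.elim fun w => ⟨w.copy (by congr) (by congr)⟩
    · exact ⟨⟨u0, hmem hu0U⟩⟩
  -- the eigenvector
  have h0s : 0 < s := by omega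
  set v0 : Fin s := ⟨0, h0s⟩ with hv0def
  set y : {w // w ∈ U} → F := fun u => x (u.1, v0) ^ s with hydef
  have hyne : ∀ u : {w // w ∈ U}, y u ≠ 0 :=
    fun u => pow_ne_zero s (xne u.1 (hPU u.1 u.2) v0)
  set eps : {w // w ∈ U} → F := fun u => P u.1 * (y u)⁻¹ with hepsdef
  have hepsy : ∀ u : {w // w ∈ U}, eps u * y u = P u.1 := by
    intro u
    rw [hepsdef]
    exact inv_mul_cancel_right₀ (hyne u) (P u.1)
  have hepsk : ∀ u : {w // w ∈ U}, eps u ^ k = 1 := by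
    intro u
    have hPk : P u.1 ^ k = x (u.1, v0) ^ (k * s) := by
      rw [hPdef, ← Finset.prod_pow]
      have : ∀ q ∈ (Finset.univ : Finset (Fin s)), x (u.1, q) ^ k = x (u.1, v0) ^ k :=
        fun q _ => hxk u.1 q v0
      rw [Finset.prod_congr rfl this, Finset.prod_const, Finset.card_univ, Fintype.card_fin,
        ← pow_mul]
    have hyk : y u ^ k = x (u.1, v0) ^ (k * s) := by
      rw [hydef, ← pow_mul, mul_comm s k]
    rw [hepsdef, mul_pow, inv_pow, hPk, hyk]
    exact mul_inv_cancel₀ (pow_ne_zero _ (xne u.1 (hPU u.1 u.2) v0))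
  refine ⟨U, ⟨u0, hu0U⟩, hconn, eps, hepsk, y, ?_, hyne, ?_⟩
  · intro hy0
    exact hyne ⟨u0, hu0U⟩ (congrFun hy0 ⟨u0, hu0U⟩)
  · intro u
    have e1 := eq1 u.1 v0
    have hxv0k : x (u.1, v0) ^ k = y u * y u := by
      rw [hydef, ← pow_add, hks]; ring_nf
    rw [hxv0k] at e1
    -- e1 : (lam - d) * (y u * y u) = P u * S u
    have hSsum : S u.1 = ∑ z ∈ G.neighborFinset u.1,
        (if hz : z ∈ U then eps ⟨z, hz⟩ * y ⟨z, hz⟩ else 0) := by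
      rw [hSdef]
      apply Finset.sum_congr rfl
      intro z hz
      by_cases h : z ∈ U
      · rw [dif_pos h, hepsy ⟨z, h⟩]
      · rw [dif_neg h]
        by_contra hPz
        exact h (hclosed u.1 u.2 z ((SimpleGraph.mem_neighborFinset G u.1 z).mp hz) hPz)
    rw [← hSsum]
    have : (lam - (G.degree u.1 : F)) * y u * y u = eps u * S u.1 * y u := by
      rw [mul_assoc, e1, ← hepsy u]; ring
    exact mul_right_cancel₀ (hyne u) this

lemma bwd {F : Type*} [Field F] (k s : ℕ) (hk : 4 ≤ k) (hks : k = 2 * s)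
    (G : SimpleGraph V) [DecidableRel G.Adj] (lam : F)
    (U : Finset V) (eps y c : {u // u ∈ U} → F)
    (hepsk : ∀ u, eps u ^ k = 1) (hy : y ≠ 0) (hc : ∀ u, c u ^ s = y u)
    (hmat : ∀ u : {u // u ∈ U},
      (lam - (G.degree u.1 : F)) * y u =
        eps u * ∑ w ∈ G.neighborFinset u.1,
          (if h : w ∈ U then eps ⟨w, h⟩ * y ⟨w, h⟩ else 0)) :
    ∃ x : V × Fin s → F, x ≠ 0 ∧ EigEq k s G lam x := by
  classical
  have hs : 2 ≤ s := by omega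
  have h0s : 0 < s := by omega
  set v0 : Fin s := ⟨0, h0s⟩ with hv0def
  set x : V × Fin s → F := fun uv =>
    if h : uv.1 ∈ U then (if uv.2 = v0 then eps ⟨uv.1, h⟩ * c ⟨uv.1, h⟩ else c ⟨uv.1, h⟩)
    else 0 with hxdef
  have hxin : ∀ (u : V) (h : u ∈ U) (v : Fin s),
      x (u, v) = if v = v0 then eps ⟨u, h⟩ * c ⟨u, h⟩ else c ⟨u, h⟩ := by
    intro u h v; rw [hxdef]; simp [h]
  have hxout : ∀ (u : V), u ∉ U → ∀ v : Fin s, x (u, v) = 0 := by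
    intro u h v; rw [hxdef]; simp [h]
  -- product over an erased half edge
  have hcard : (Finset.univ.erase v0).card = s - 1 := by
    rw [Finset.card_erase_of_mem (Finset.mem_univ v0), Finset.card_univ, Fintype.card_fin]
  have hprod_erase_v0 : ∀ (u : V) (h : u ∈ U),
      (∏ p ∈ Finset.univ.erase v0, x (u, p)) = c ⟨u, h⟩ ^ (s - 1) := by
    intro u h
    have : ∀ p ∈ Finset.univ.erase v0, x (u, p) = c ⟨u, h⟩ := by
      intro p hp
      rw [hxin u h p, if_neg (Finset.ne_of_mem_erase hp)]
    rw [Finset.prod_congr rfl this, Finset.prod_const, hcard]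
  have hprod : ∀ w : V,
      (∏ q : Fin s, x (w, q)) = (if h : w ∈ U then eps ⟨w, h⟩ * y ⟨w, h⟩ else 0) := by
    intro w
    by_cases h : w ∈ U
    · rw [dif_pos h, ← Finset.mul_prod_erase Finset.univ _ (Finset.mem_univ v0),
        hprod_erase_v0 w h, hxin w h v0, if_pos rfl, ← hc ⟨w, h⟩]
      have : c ⟨w, h⟩ * c ⟨w, h⟩ ^ (s - 1) = c ⟨w, h⟩ ^ s := by
        rw [← pow_succ']
        congr 1
        omega
      rw [mul_assoc, this]
    · rw [dif_neg h]
      exact Finset.prod_eq_zero (Finset.mem_univ v0) (hxout w h v0)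
  refine ⟨x, ?_, ?_⟩
  · -- x ≠ 0
    obtain ⟨u1, hu1⟩ := Function.ne_iff.mp hy
    have hc1 : c u1 ≠ 0 := by
      intro h
      apply hu1
      rw [← hc u1, h, zero_pow (by omega : s ≠ 0), Pi.zero_apply]
    have h1s : 1 < s := by omega
    set v1 : Fin s := ⟨1, h1s⟩ with hv1def
    have hv10 : v1 ≠ v0 := by
      simp [hv1def, hv0def, Fin.ext_iff]
    intro hx0
    have := congrFun hx0 (u1.1, v1)
    rw [hxin u1.1 u1.2 v1, if_neg hv10, Pi.zero_apply] at this
    exact hc1 (by rwa [Subtype.coe_eta] at this)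
  · -- the eigen-equation
    intro u v
    have hrhs : (∑ w ∈ G.neighborFinset u,
        (∏ p ∈ Finset.univ.erase v, x (u, p)) * ∏ q : Fin s, x (w, q)) =
        (∏ p ∈ Finset.univ.erase v, x (u, p)) *
          ∑ w ∈ G.neighborFinset u,
            (if h : w ∈ U then eps ⟨w, h⟩ * y ⟨w, h⟩ else 0) := by
      rw [Finset.mul_sum]
      exact Finset.sum_congr rfl fun w _ => by rw [hprod w]
    rw [hrhs]
    by_cases h : u ∈ U
    · set S := ∑ w ∈ G.neighborFinset u,
        (if h : w ∈ U then eps ⟨w, h⟩ * y ⟨w, h⟩ else 0) with hSdef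
      have hmatu : (lam - (G.degree u : F)) * y ⟨u, h⟩ = eps ⟨u, h⟩ * S := by
        have h' := hmat ⟨u, h⟩
        rw [← hSdef] at h'
        exact h'
      by_cases hv : v = v0
      · subst hv
        rw [hprod_erase_v0 u h, hxin u h v0, if_pos rfl]
        have hS : S = eps ⟨u, h⟩ ^ (k - 1) * ((lam - (G.degree u : F)) * y ⟨u, h⟩) := by
          have h1 : eps ⟨u, h⟩ ^ (k - 1) * (eps ⟨u, h⟩ * S) = eps ⟨u, h⟩ ^ k * S := by
            rw [← mul_assoc, ← pow_succ]
            congr 2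
            omega
          rw [hmatu, h1, hepsk, one_mul]
        rw [hS, mul_pow, ← hc ⟨u, h⟩]
        have hexp : c ⟨u, h⟩ ^ (k - 1) = c ⟨u, h⟩ ^ (s - 1) * c ⟨u, h⟩ ^ s := by
          rw [← pow_add]
          congr 1
          omega
        rw [hexp]
        ring
      · rw [hxin u h v, if_neg hv]
        have hmem0 : v0 ∈ Finset.univ.erase v :=
          Finset.mem_erase.mpr ⟨fun hh => hv hh.symm, Finset.mem_univ v0⟩
        have hprodv : (∏ p ∈ Finset.univ.erase v, x (u, p)) =
            eps ⟨u, h⟩ * c ⟨u, h⟩ ^ (s - 1) := by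
          rw [← Finset.mul_prod_erase _ _ hmem0, hxin u h v0, if_pos rfl]
          have hcongr : ∀ p ∈ (Finset.univ.erase v).erase v0, x (u, p) = c ⟨u, h⟩ := by
            intro p hp
            rw [hxin u h p, if_neg (Finset.ne_of_mem_erase hp)]
          rw [Finset.prod_congr rfl hcongr, Finset.prod_const]
          have hcard2 : ((Finset.univ.erase v).erase v0).card = s - 2 := by
            rw [Finset.card_erase_of_mem hmem0, Finset.card_erase_of_mem (Finset.mem_univ v),
              Finset.card_univ, Fintype.card_fin]
            omega
          rw [hcard2, mul_assoc, ← pow_succ']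
          congr 2
          omega
        rw [hprodv]
        have hexp : c ⟨u, h⟩ ^ (k - 1) = c ⟨u, h⟩ ^ (s - 1) * c ⟨u, h⟩ ^ s := by
          rw [← pow_add]
          congr 1
          omega
        calc (lam - (G.degree u : F)) * c ⟨u, h⟩ ^ (k - 1)
            = c ⟨u, h⟩ ^ (s - 1) * ((lam - (G.degree u : F)) * y ⟨u, h⟩) := by
              rw [← hc ⟨u, h⟩, hexp]; ring
          _ = c ⟨u, h⟩ ^ (s - 1) * (eps ⟨u, h⟩ * S) := by rw [hmatu]
          _ = (eps ⟨u, h⟩ * c ⟨u, h⟩ ^ (s - 1)) * S := by ring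
        
    · rw [hxout u h v, zero_pow (by omega : k - 1 ≠ 0), mul_zero]
      have hne : (Finset.univ.erase v).Nonempty := by
        rw [← Finset.card_pos, Finset.card_erase_of_mem (Finset.mem_univ v),
          Finset.card_univ, Fintype.card_fin]
        omega
      obtain ⟨p, hp⟩ := hne
      rw [Finset.prod_eq_zero hp (hxout u h p), zero_mul]


lemma pair_iff (k s : ℕ) (G : SimpleGraph V) [DecidableRel G.Adj]
    (lam : ℂ) (x : V × Fin s → ℂ) :
    IsSignlessLapEigenpair k s G lam x ↔ (x ≠ 0 ∧ EigEq k s G lam x) := Iff.rfl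

lemma pair_iff_real (k s : ℕ) (G : SimpleGraph V) [DecidableRel G.Adj]
    (lam : ℝ) (x : V × Fin s → ℝ) :
    IsSignlessLapEigenpair k s G (lam : ℂ) (fun v => (x v : ℂ)) ↔
      (x ≠ 0 ∧ EigEq k s G lam x) := by
  rw [pair_iff]
  constructor
  · rintro ⟨h0, h⟩
    refine ⟨?_, ?_⟩
    · intro hx
      apply h0
      funext v
      rw [hx]
      simp
    · intro u v
      have h' := h u v
      simp only [] at h'
      exact_mod_cast h'
  · rintro ⟨h0, h⟩
    refine ⟨?_, ?_⟩
    · intro hx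
      apply h0
      funext v
      have h' := congrFun hx v
      simpa using h'
    · intro u v
      have h' := h u v
      show ((lam : ℂ) - (G.degree u : ℂ)) * ((x (u, v) : ℝ) : ℂ) ^ (k - 1) =
        ∑ w ∈ G.neighborFinset u,
          (∏ p ∈ Finset.univ.erase v, ((x (u, p) : ℝ) : ℂ)) *
            ∏ q : Fin s, ((x (w, q) : ℝ) : ℂ)
      exact_mod_cast h'

end Aux

theorem stmt12 {V : Type*} [Fintype V] [DecidableEq V] (k s : ℕ)
    (hk : 4 ≤ k) (hks : k = 2 * s) (G : SimpleGraph V) [DecidableRel G.Adj] :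
    ({lam : ℂ | ∃ x : V × Fin s → ℂ, IsSignlessLapEigenpair k s G lam x} =
      {lam : ℂ | ∃ U : Finset V, U.Nonempty ∧ (G.induce (↑U : Set V)).Connected ∧
        ∃ eps : {u // u ∈ U} → ℂ, (∀ u, eps u ^ k = 1) ∧
          ∃ y : {u // u ∈ U} → ℂ, y ≠ 0 ∧
            (Matrix.diagonal (fun u : {u // u ∈ U} => (G.degree u.1 : ℂ)) +
                Matrix.diagonal eps * (G.adjMatrix ℂ).submatrix Subtype.val Subtype.val *
                  Matrix.diagonal eps) *ᵥ y = lam • y}) ∧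
    ({lam : ℝ | ∃ x : V × Fin s → ℝ,
        IsSignlessLapEigenpair k s G (lam : ℂ) (fun v => (x v : ℂ))} =
      {lam : ℝ | ∃ U : Finset V, U.Nonempty ∧ (G.induce (↑U : Set V)).Connected ∧
        ∃ y : {u // u ∈ U} → ℝ, y ≠ 0 ∧
          (Matrix.diagonal (fun u : {u // u ∈ U} => (G.degree u.1 : ℝ)) +
              (G.adjMatrix ℝ).submatrix Subtype.val Subtype.val) *ᵥ y = lam • y}) := by
  classical
  constructor
  · -- complex part
    ext lam
    simp only [Set.mem_setOf_eq]
    constructor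
    · rintro ⟨x, hpair⟩
      obtain ⟨hx0, heqn⟩ := (pair_iff k s G lam x).mp hpair
      obtain ⟨U, hUne, hconn, eps, hepsk, y, hy0, hyne, hmat⟩ :=
        fwd k s hk hks G lam x hx0 heqn
      exact ⟨U, hUne, hconn, eps, hepsk, y, hy0, (mulVec_iff G U eps y lam).mpr hmat⟩
    · rintro ⟨U, hUne, hconn, eps, hepsk, y, hy0, hmv⟩
      have hmat := (mulVec_iff G U eps y lam).mp hmv
      choose c hc using fun u => IsAlgClosed.exists_pow_nat_eq (y u) (show 0 < s by omega)
      obtain ⟨x, hx0, heqn⟩ := bwd k s hk hks G lam U eps y c hepsk hy0 hc hmat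
      exact ⟨x, (pair_iff k s G lam x).mpr ⟨hx0, heqn⟩⟩
  · -- real part
    ext lam
    simp only [Set.mem_setOf_eq]
    constructor
    · rintro ⟨x, hpair⟩
      obtain ⟨hx0, heqn⟩ := (pair_iff_real k s G lam x).mp hpair
      obtain ⟨U, hUne, hconn, eps, hepsk, y, hy0, hyne, hmat⟩ :=
        fwd k s hk hks G lam x hx0 heqn
      have heps2 : ∀ u, eps u * eps u = 1 := by
        intro u
        rcases pow_eq_one_iff_cases.mp (hepsk u) with h | h | ⟨h, -⟩
        · omega
        · rw [h]; norm_num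
        · rw [h]; norm_num
      set y' : {u // u ∈ U} → ℝ := fun u => eps u * y u with hy'def
      have hepsne : ∀ u, eps u ≠ 0 := by
        intro u he
        have h2 := heps2 u
        rw [he, zero_mul] at h2
        exact zero_ne_one h2
      have hy'0 : y' ≠ 0 := by
        intro hh
        obtain ⟨u0, hu0⟩ := hUne
        have h := congrFun hh ⟨u0, hu0⟩
        simp only [hy'def, Pi.zero_apply] at h
        rcases mul_eq_zero.mp h with h' | h'
        · exact hepsne _ h'
        · exact hyne _ h'
      have hmat' : ∀ u : {u // u ∈ U},
          (lam - (G.degree u.1 : ℝ)) * y' u =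
            1 * ∑ w ∈ G.neighborFinset u.1,
              (if h : w ∈ U then (1:ℝ) * y' ⟨w, h⟩ else 0) := by
        intro u
        have h := hmat u
        have hsum : (∑ w ∈ G.neighborFinset u.1,
            (if hw : w ∈ U then (1:ℝ) * y' ⟨w, hw⟩ else 0))
            = ∑ w ∈ G.neighborFinset u.1,
              (if hw : w ∈ U then eps ⟨w, hw⟩ * y ⟨w, hw⟩ else 0) := by
          apply Finset.sum_congr rfl
          intro w _
          by_cases hw : w ∈ U
          · rw [dif_pos hw, dif_pos hw, one_mul]
          · rw [dif_neg hw, dif_neg hw]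
        rw [hsum, one_mul]
        calc (lam - (G.degree u.1 : ℝ)) * y' u
            = eps u * ((lam - (G.degree u.1 : ℝ)) * y u) := by simp only [hy'def]; ring
          _ = eps u * (eps u * ∑ w ∈ G.neighborFinset u.1,
              (if hw : w ∈ U then eps ⟨w, hw⟩ * y ⟨w, hw⟩ else 0)) := by rw [h]
          _ = _ := by rw [← mul_assoc, heps2 u, one_mul]
      have hmv := (mulVec_iff G U (fun _ => (1:ℝ)) y' lam).mpr hmat'
      rw [show (Matrix.diagonal fun _ : {u // u ∈ U} => (1:ℝ)) = 1 from Matrix.diagonal_one,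
        one_mul, mul_one] at hmv
      exact ⟨U, hUne, hconn, y', hy'0, hmv⟩
    · rintro ⟨U, hUne, hconn, y, hy0, hmv⟩
      have hmv' : (Matrix.diagonal (fun u : {u // u ∈ U} => (G.degree u.1 : ℝ)) +
          Matrix.diagonal (fun _ : {u // u ∈ U} => (1:ℝ)) *
            (G.adjMatrix ℝ).submatrix Subtype.val Subtype.val *
            Matrix.diagonal (fun _ : {u // u ∈ U} => (1:ℝ))) *ᵥ y = lam • y := by
        rw [show (Matrix.diagonal fun _ : {u // u ∈ U} => (1:ℝ)) = 1 from Matrix.diagonal_one,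
          one_mul, mul_one]
        exact hmv
      have hmat := (mulVec_iff G U (fun _ => (1:ℝ)) y lam).mp hmv'
      set δ : {u // u ∈ U} → ℝ := fun u => if 0 ≤ y u then 1 else -1 with hδdef
      have hδ2 : ∀ u, δ u * δ u = 1 := by
        intro u
        simp only [hδdef]
        by_cases h : 0 ≤ y u <;> simp [h]
      have hδk : ∀ u, δ u ^ k = 1 := by
        intro u
        have hek : Even k := ⟨s, by omega⟩
        simp only [hδdef]
        by_cases h : 0 ≤ y u <;> simp [h, hek.neg_one_pow]
      set Y : {u // u ∈ U} → ℝ := fun u => δ u * y u with hYdef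
      have hδne : ∀ u, δ u ≠ 0 := by
        intro u he
        have h2 := hδ2 u
        rw [he, zero_mul] at h2
        exact zero_ne_one h2
      have hY0 : Y ≠ 0 := by
        intro hh
        obtain ⟨u, hu⟩ := Function.ne_iff.mp hy0
        have h := congrFun hh u
        simp only [hYdef, Pi.zero_apply] at h
        rcases mul_eq_zero.mp h with h' | h'
        · exact hδne _ h'
        · exact hu (by rw [h']; rfl)
      have hc : ∀ u, (|y u| ^ ((s : ℝ)⁻¹)) ^ s = Y u := by
        intro u
        rw [Real.rpow_inv_natCast_pow (abs_nonneg _) (by omega : s ≠ 0)]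
        simp only [hYdef, hδdef]
        by_cases h : 0 ≤ y u
        · rw [if_pos h, one_mul, abs_of_nonneg h]
        · rw [if_neg h, abs_of_neg (lt_of_not_ge h)]
          ring
      have hmatδ : ∀ u : {u // u ∈ U},
          (lam - (G.degree u.1 : ℝ)) * Y u =
            δ u * ∑ w ∈ G.neighborFinset u.1,
              (if h : w ∈ U then δ ⟨w, h⟩ * Y ⟨w, h⟩ else 0) := by
        intro u
        have h := hmat u
        simp only [one_mul] at h
        have hsum : (∑ w ∈ G.neighborFinset u.1,
            (if hw : w ∈ U then δ ⟨w, hw⟩ * Y ⟨w, hw⟩ else 0))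
            = ∑ w ∈ G.neighborFinset u.1,
              (if hw : w ∈ U then y ⟨w, hw⟩ else 0) := by
          apply Finset.sum_congr rfl
          intro w _
          by_cases hw : w ∈ U
          · rw [dif_pos hw, dif_pos hw]
            simp only [hYdef]
            rw [← mul_assoc, hδ2, one_mul]
          · rw [dif_neg hw, dif_neg hw]
        rw [hsum]
        calc (lam - (G.degree u.1 : ℝ)) * Y u
            = δ u * ((lam - (G.degree u.1 : ℝ)) * y u) := by simp only [hYdef]; ring
          _ = _ := by rw [h]
      obtain ⟨x, hx0, heqn⟩ := bwd k s hk hks G lam U δ Y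
        (fun u => |y u| ^ ((s : ℝ)⁻¹)) hδk hY0 hc hmatδ
      exact ⟨x, (pair_iff_real k s G lam x).mpr ⟨hx0, heqn⟩⟩
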